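/- The adjoint of H_{φ,ψ}^α equals H_{ψ,φ}^{ᾱ}, where H_{ψ,φ}^{ᾱ} f = Σ_n \overline{α_n} ⟨f, φ_n⟩ ψ_n on the domain {f : Σ_n |α_n|^2 |⟨f, φ_n⟩|^2 < ∞}. -/

import Mathlib

noncomputable section

open ContinuousLinearMap

local notation "⟪" x ", " y "⟫" => @inner ℂ _ _ x y

theorem adjoint_of_H
    {H : Type*} [NormedAddCommGroup H] [InnerProductSpace ℂ H] [CompleteSpace H]
    (e : HilbertBasis ℕ ℂ H) (T : H ≃L[ℂ] H) (φ ψ : ℕ → H)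
    (hφ : ∀ n, φ n = T (e n))
    (hψ : ∀ n, ψ n = adjoint (T.symm : H →L[ℂ] H) (e n)) (α : ℕ → ℂ) :
    ∀ g h : H,
      (∀ f k : H, HasSum (fun n => (α n * ⟪ψ n, f⟫) • φ n) k → ⟪g, k⟫ = ⟪h, f⟫) ↔
        HasSum (fun n => ((starRingEnd ℂ) (α n) * ⟪φ n, g⟫) • ψ n) h := by
  intro g h
  constructor
  · intro hyp
    have orth : ∀ n m : ℕ, ⟪ψ n, φ m⟫ = if n = m then 1 else 0 := by
      intro n m
      rw [hψ, hφ, ContinuousLinearMap.adjoint_inner_left]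
      simp only [ContinuousLinearEquiv.coe_coe, ContinuousLinearEquiv.symm_apply_apply]
      exact orthonormal_iff_ite.mp e.orthonormal n m
    -- test hypothesis with f = φ m
    have key : ∀ m : ℕ, (starRingEnd ℂ) (α m) * ⟪φ m, g⟫ = ⟪e m, adjoint (T : H →L[ℂ] H) h⟫ := by
      intro m
      have hs : HasSum (fun n => (α n * ⟪ψ n, φ m⟫) • φ n) (α m • φ m) := by
        have := hasSum_ite_eq m (α m • φ m)
        refine this.congr_fun fun n => ?_
        rcases eq_or_ne n m with rfl | hnm
        · simp [orth]
        · simp [orth, hnm]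
      have h1 := hyp (φ m) (α m • φ m) hs
      rw [inner_smul_right] at h1
      have h2 := congrArg (starRingEnd ℂ) h1
      simp only [map_mul, inner_conj_symm] at h2
      rw [h2, hφ, ContinuousLinearMap.adjoint_inner_right]
      rfl
    have hrep : HasSum (fun m => ⟪e m, adjoint (T : H →L[ℂ] H) h⟫ • e m)
        (adjoint (T : H →L[ℂ] H) h) := by
      have := e.hasSum_repr (adjoint (T : H →L[ℂ] H) h)
      refine this.congr_fun fun m => ?_
      rw [e.repr_apply_apply]
    have hmap := hrep.mapL (adjoint (T.symm : H →L[ℂ] H))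
    have hid : adjoint (T.symm : H →L[ℂ] H) (adjoint (T : H →L[ℂ] H) h) = h := by
      rw [← ContinuousLinearMap.comp_apply, ← ContinuousLinearMap.adjoint_comp]
      simp [ContinuousLinearMap.adjoint_id]
    rw [hid] at hmap
    refine hmap.congr_fun fun m => ?_
    rw [key m, hψ]
    simp
  · intro hc f k hk
    have h1 := hk.mapL (innerSL ℂ g)
    have h2 := hc.mapL (innerSL ℂ f)
    simp only [innerSL_apply_apply, inner_smul_right] at h1 h2
    have h3 : HasSum (fun n => (starRingEnd ℂ) ((starRingEnd ℂ) (α n) * ⟪φ n, g⟫ * ⟪f, ψ n⟫))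
        ((starRingEnd ℂ) ⟪f, h⟫) := by
      exact (Complex.hasSum_conj' ).mpr h2 |>.congr_fun fun n => rfl
    rw [inner_conj_symm] at h3
    refine h1.unique (h3.congr_fun fun n => ?_)
    simp only [map_mul, RingHomCompTriple.comp_apply, inner_conj_symm,
      RingHom.id_apply, starRingEnd_self_apply]
    ring
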